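/- arXiv:2307.06712 — 3 statements merged into one kernel-verified Lean document; each statement's English description precedes it below -/
import Mathlib

section
/- Let H be a Hilbert space and T a self-adjoint operator on H that is bounded below, with eigenvalues λ_1 ≤ λ_2 ≤ ... below the essential spectrum. Suppose there exist vectors u_1,...,u_n in the domain of T and constants ε, δ > 0 with δ < 1/(2n) such that ‖T u_i‖ ≤ ε for all i, |⟨u_i,u_j⟩ - δ_{ij}| ≤ δ for all i,j, and λ_{n+1}(T) > 0 exists. Then λ_n(T) ≤ 2n ε / (1 - 2nδ) (in particular, the n-th min-max value is bounded by a constant times ε). -/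
/-- The `n`-th min-max value of an operator `T` on a Hilbert space:
the infimum over `n`-dimensional subspaces `M` of the supremum of the
Rayleigh quotient `re ⟪Tφ, φ⟫` over unit vectors `φ ∈ M`. -/
noncomputable def minmaxValue {H : Type*} [NormedAddCommGroup H] [InnerProductSpace ℂ H]
    (T : H →L[ℂ] H) (n : ℕ) : ℝ :=
  sInf { c : ℝ | ∃ M : Submodule ℂ H, Module.finrank ℂ M = n ∧
    c = sSup { r : ℝ | ∃ φ : H, φ ∈ M ∧ ‖φ‖ = 1 ∧ r = Complex.re (inner ℂ (T φ) φ : ℂ) } }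

private lemma gram_bound' {H : Type*} [NormedAddCommGroup H] [InnerProductSpace ℂ H]
    {n : ℕ} (u : Fin n → H) {δ : ℝ}
    (hgram : ∀ i j, ‖(inner ℂ (u i) (u j) : ℂ) - (if i = j then 1 else 0)‖ ≤ δ)
    (c : Fin n → ℂ) :
    |‖∑ i, c i • u i‖^2 - ∑ i, ‖c i‖^2| ≤ δ * (∑ i, ‖c i‖)^2 := by
  set φ := ∑ i, c i • u i with hφ
  have hinner : (inner ℂ φ φ : ℂ)
      = ∑ i, ∑ j, (starRingEnd ℂ) (c i) * c j * inner ℂ (u i) (u j) := by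
    rw [hφ]
    simp only [sum_inner, inner_sum, inner_smul_left, inner_smul_right, Finset.mul_sum]
    rw [Finset.sum_comm]
    exact Finset.sum_congr rfl fun i _ => Finset.sum_congr rfl fun j _ => by ring
  have hdiag : (∑ i, ((‖c i‖:ℂ))^2)
      = ∑ i, ∑ j, (starRingEnd ℂ) (c i) * c j * (if i = j then (1:ℂ) else 0) := by
    refine Finset.sum_congr rfl fun i _ => ?_
    rw [Finset.sum_eq_single i]
    · rw [if_pos rfl, mul_one, ← Complex.normSq_eq_conj_mul_self]
      simp [Complex.normSq_eq_norm_sq]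
    · intro j _ hj; rw [if_neg (Ne.symm hj), mul_zero]
    · intro h; exact absurd (Finset.mem_univ i) h
  have hE : (inner ℂ φ φ : ℂ) - ∑ i, ((‖c i‖:ℂ))^2
      = ∑ i, ∑ j, (starRingEnd ℂ) (c i) * c j
          * ((inner ℂ (u i) (u j) : ℂ) - (if i = j then 1 else 0)) := by
    rw [hinner, hdiag, ← Finset.sum_sub_distrib]
    refine Finset.sum_congr rfl fun i _ => ?_
    rw [← Finset.sum_sub_distrib]
    exact Finset.sum_congr rfl fun j _ => by ring
  have hEnorm : ‖(inner ℂ φ φ : ℂ) - ∑ i, ((‖c i‖:ℂ))^2‖ ≤ δ * (∑ i, ‖c i‖)^2 := by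
    rw [hE]
    calc ‖∑ i, ∑ j, (starRingEnd ℂ) (c i) * c j
          * ((inner ℂ (u i) (u j) : ℂ) - (if i = j then 1 else 0))‖
        ≤ ∑ i, ∑ j, ‖(starRingEnd ℂ) (c i) * c j
          * ((inner ℂ (u i) (u j) : ℂ) - (if i = j then 1 else 0))‖ := by
          refine (norm_sum_le _ _).trans (Finset.sum_le_sum fun i _ => norm_sum_le _ _)
      _ ≤ ∑ i, ∑ j, ‖c i‖ * ‖c j‖ * δ := by
          refine Finset.sum_le_sum fun i _ => Finset.sum_le_sum fun j _ => ?_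
          rw [norm_mul, norm_mul, RCLike.norm_conj]
          exact mul_le_mul_of_nonneg_left (hgram i j)
            (mul_nonneg (norm_nonneg _) (norm_nonneg _))
      _ = δ * (∑ i, ‖c i‖)^2 := by
          rw [sq, Finset.sum_mul_sum, Finset.mul_sum]
          refine Finset.sum_congr rfl fun i _ => ?_
          rw [Finset.mul_sum]
          exact Finset.sum_congr rfl fun j _ => by ring
  have hre : Complex.re ((inner ℂ φ φ : ℂ) - ∑ i, ((‖c i‖:ℂ))^2)
      = ‖φ‖^2 - ∑ i, ‖c i‖^2 := by
    rw [Complex.sub_re]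
    congr 1
    · have := inner_self_eq_norm_sq (𝕜 := ℂ) φ
      simpa using this
    · simp [← Complex.ofReal_pow]
  calc |‖φ‖^2 - ∑ i, ‖c i‖^2| = |Complex.re ((inner ℂ φ φ : ℂ) - ∑ i, ((‖c i‖:ℂ))^2)| := by
        rw [hre]
    _ ≤ ‖(inner ℂ φ φ : ℂ) - ∑ i, ((‖c i‖:ℂ))^2‖ := Complex.abs_re_le_norm _
    _ ≤ δ * (∑ i, ‖c i‖)^2 := hEnorm

private lemma lower_bound' {H : Type*} [NormedAddCommGroup H] [InnerProductSpace ℂ H]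
    {n : ℕ} (u : Fin n → H) {δ : ℝ} (hδ0 : 0 ≤ δ)
    (hgram : ∀ i j, ‖(inner ℂ (u i) (u j) : ℂ) - (if i = j then 1 else 0)‖ ≤ δ)
    (c : Fin n → ℂ) :
    (1 - n * δ) * ∑ i, ‖c i‖^2 ≤ ‖∑ i, c i • u i‖^2 := by
  have h1 := abs_le.mp (gram_bound' u hgram c)
  have h2 : (∑ i, ‖c i‖)^2 ≤ (n:ℝ) * ∑ i, ‖c i‖^2 := by
    have := sq_sum_le_card_mul_sum_sq (s := (Finset.univ : Finset (Fin n)))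
      (f := fun i => ‖c i‖)
    simpa using this
  have h3 : δ * (∑ i, ‖c i‖)^2 ≤ δ * ((n:ℝ) * ∑ i, ‖c i‖^2) :=
    mul_le_mul_of_nonneg_left h2 hδ0
  nlinarith [h1.1, h1.2]

private lemma rayleigh_le {H : Type*} [NormedAddCommGroup H] [InnerProductSpace ℂ H]
    (T : H →L[ℂ] H) (φ : H) : Complex.re (inner ℂ (T φ) φ : ℂ) ≤ ‖T φ‖ * ‖φ‖ := by
  have := re_inner_le_norm (𝕜 := ℂ) (T φ) φ
  simpa using this

/-- if `T` is a self-adjoint operator bounded from below, and `u 1, …, u n`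
are quasi-modes with `‖T (u i)‖ ≤ ε` and Gram matrix `δ`-close to the identity with
`δ < 1/(2n)`, and the `(n+1)`-st min-max value is positive, then the `n`-th min-max
value is at most `2 n ε / (1 - 2 n δ)`. -/
theorem stmt0 {H : Type*} [NormedAddCommGroup H] [InnerProductSpace ℂ H] [CompleteSpace H]
    (T : H →L[ℂ] H) (hT : IsSelfAdjoint T)
    (hbdd : ∃ c : ℝ, ∀ x : H, c * ‖x‖ ^ 2 ≤ Complex.re (inner ℂ (T x) x : ℂ))
    (n : ℕ) (hn : 1 ≤ n) (u : Fin n → H) (ε δ : ℝ) (hε : 0 < ε) (hδ : 0 < δ)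
    (hδ' : δ < 1 / (2 * n))
    (hTu : ∀ i, ‖T (u i)‖ ≤ ε)
    (hgram : ∀ i j, ‖(inner ℂ (u i) (u j) : ℂ) - (if i = j then 1 else 0)‖ ≤ δ)
    (hpos : 0 < minmaxValue T (n + 1)) :
    minmaxValue T n ≤ 2 * n * ε / (1 - 2 * n * δ) := by
  obtain ⟨c₀, hc₀⟩ := hbdd
  have hn' : (1:ℝ) ≤ n := by exact_mod_cast hn
  have hδ0 : (0:ℝ) ≤ δ := le_of_lt hδ
  have h2nδ : 2 * (n:ℝ) * δ < 1 := by
    rw [lt_div_iff₀ (by positivity)] at hδ'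
    linarith
  -- linear independence of u
  have hli : LinearIndependent ℂ u := by
    rw [Fintype.linearIndependent_iff]
    intro c hc i
    have hlb := lower_bound' u hδ0 hgram c
    rw [hc, norm_zero] at hlb
    have hq0 : (0:ℝ) ≤ ∑ j, ‖c j‖^2 := Finset.sum_nonneg fun j _ => sq_nonneg _
    have hq : ∑ j, ‖c j‖^2 ≤ 0 := by nlinarith
    have h1 : ‖c i‖^2 ≤ 0 :=
      le_trans (Finset.single_le_sum (f := fun j => ‖c j‖^2)
        (fun j _ => sq_nonneg _) (Finset.mem_univ i)) hq
    have : ‖c i‖ = 0 := by nlinarith [norm_nonneg (c i)]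
    exact norm_eq_zero.mp this
  set M : Submodule ℂ H := Submodule.span ℂ (Set.range u) with hM
  have hrank : Module.finrank ℂ M = n := by
    rw [hM, finrank_span_eq_card hli]; simp
  set B : ℝ := 2 * n * ε / (1 - 2 * n * δ) with hB
  have hB1 : 2 * (n:ℝ) * ε ≤ B := by
    rw [hB, le_div_iff₀ (by linarith)]
    have h1 : (0:ℝ) ≤ 2 * n * ε := by positivity
    nlinarith [mul_nonneg (mul_nonneg h1 (by positivity : (0:ℝ) ≤ 2 * (n:ℝ))) hδ0]
  set R : Set ℝ := { r : ℝ | ∃ φ : H, φ ∈ M ∧ ‖φ‖ = 1 ∧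
    r = Complex.re (inner ℂ (T φ) φ : ℂ) } with hR
  -- every element of R is at most B
  have hray : ∀ r ∈ R, r ≤ B := by
    rintro r ⟨φ, hmem, hnorm, rfl⟩
    obtain ⟨c, hc⟩ := Submodule.mem_span_range_iff_exists_fun ℂ |>.mp hmem
    set s : ℝ := ∑ i, ‖c i‖ with hs
    set q : ℝ := ∑ i, ‖c i‖^2 with hqdef
    have hs0 : 0 ≤ s := Finset.sum_nonneg fun i _ => norm_nonneg _
    have hq0 : 0 ≤ q := Finset.sum_nonneg fun i _ => sq_nonneg _
    have hlb := lower_bound' u hδ0 hgram c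
    rw [hc, hnorm] at hlb
    have hq2 : q ≤ 2 := by nlinarith
    have hsq : s^2 ≤ (n:ℝ) * q := by
      have := sq_sum_le_card_mul_sum_sq (s := (Finset.univ : Finset (Fin n)))
        (f := fun i => ‖c i‖)
      simpa using this
    have hs2n : s ≤ 2 * n := by nlinarith [sq_nonneg (s - 2*n)]
    have hTφ : ‖T φ‖ ≤ s * ε := by
      rw [← hc]
      calc ‖T (∑ i, c i • u i)‖ = ‖∑ i, c i • T (u i)‖ := by
            rw [map_sum]; simp only [map_smul]
        _ ≤ ∑ i, ‖c i • T (u i)‖ := norm_sum_le _ _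
        _ ≤ ∑ i, ‖c i‖ * ε := Finset.sum_le_sum fun i _ => by
            rw [norm_smul]
            exact mul_le_mul_of_nonneg_left (hTu i) (norm_nonneg _)
        _ = s * ε := by rw [hs, Finset.sum_mul]
    calc Complex.re (inner ℂ (T φ) φ : ℂ) ≤ ‖T φ‖ * ‖φ‖ := rayleigh_le T φ
      _ = ‖T φ‖ := by rw [hnorm, mul_one]
      _ ≤ s * ε := hTφ
      _ ≤ 2 * n * ε := mul_le_mul_of_nonneg_right hs2n hε.le
      _ ≤ B := hB1
  -- R is nonempty
  have hRne : R.Nonempty := by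
    have hu0 : u ⟨0, hn⟩ ≠ 0 := by
      intro h
      have := hgram ⟨0, hn⟩ ⟨0, hn⟩
      rw [h] at this
      simp at this
      nlinarith [mul_le_mul_of_nonneg_left this (by positivity : (0:ℝ) ≤ 2 * (n:ℝ))]
    refine ⟨_, ‖u ⟨0, hn⟩‖⁻¹ • u ⟨0, hn⟩, ?_, norm_smul_inv_norm hu0, rfl⟩
    exact Submodule.smul_mem _ _ (Submodule.subset_span ⟨⟨0, hn⟩, rfl⟩)
  -- bounded below of the outer set
  have hbddBelow : BddBelow { c : ℝ | ∃ M' : Submodule ℂ H, Module.finrank ℂ M' = n ∧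
      c = sSup { r : ℝ | ∃ φ : H, φ ∈ M' ∧ ‖φ‖ = 1 ∧
        r = Complex.re (inner ℂ (T φ) φ : ℂ) } } := by
    refine ⟨c₀, ?_⟩
    rintro c ⟨M', hM', rfl⟩
    have hrankpos : (0:Cardinal) < Module.rank ℂ M' := by
      have : (0:ℕ) < Module.finrank ℂ M' := by omega
      exact_mod_cast Module.lt_rank_of_lt_finrank this
    obtain ⟨x, hx, hx0⟩ := exists_mem_ne_zero_of_rank_pos hrankpos
    set φ := ‖x‖⁻¹ • x with hφ
    have hφnorm : ‖φ‖ = 1 := norm_smul_inv_norm hx0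
    have hφmem : φ ∈ M' := Submodule.smul_mem _ _ hx
    have hmemR : Complex.re (inner ℂ (T φ) φ : ℂ) ∈
        { r : ℝ | ∃ ψ : H, ψ ∈ M' ∧ ‖ψ‖ = 1 ∧
          r = Complex.re (inner ℂ (T ψ) ψ : ℂ) } := ⟨φ, hφmem, hφnorm, rfl⟩
    have hub : ∀ r ∈ { r : ℝ | ∃ ψ : H, ψ ∈ M' ∧ ‖ψ‖ = 1 ∧
        r = Complex.re (inner ℂ (T ψ) ψ : ℂ) }, r ≤ ‖T‖ := by
      rintro r ⟨ψ, _, hψn, rfl⟩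
      calc Complex.re (inner ℂ (T ψ) ψ : ℂ) ≤ ‖T ψ‖ * ‖ψ‖ := rayleigh_le T ψ
        _ ≤ ‖T‖ * ‖ψ‖ * ‖ψ‖ :=
            mul_le_mul_of_nonneg_right (T.le_opNorm ψ) (norm_nonneg _)
        _ = ‖T‖ := by rw [hψn]; ring
    have hc₀le : c₀ ≤ Complex.re (inner ℂ (T φ) φ : ℂ) := by
      have := hc₀ φ
      rw [hφnorm] at this
      linarith
    exact hc₀le.trans (le_csSup ⟨‖T‖, hub⟩ hmemR)
  -- conclude
  have hmem : sSup R ∈ { c : ℝ | ∃ M' : Submodule ℂ H, Module.finrank ℂ M' = n ∧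
      c = sSup { r : ℝ | ∃ φ : H, φ ∈ M' ∧ ‖φ‖ = 1 ∧
        r = Complex.re (inner ℂ (T φ) φ : ℂ) } } := ⟨M, hrank, rfl⟩
  have h1 : minmaxValue T n ≤ sSup R := csInf_le hbddBelow hmem
  exact h1.trans (csSup_le hRne hray)
end

section
/- Let v_0 : [0,∞) → R be continuous, nonpositive, vanishing on [a,∞), with minimum v_min < 0, and let L > 2a. Define d(r) = ∫_0^r √(ρ²/4 + v_0(ρ) - v_min) dρ, S_0 = d(L), S_a = d(a) + d(L-a), Ŝ_a = d(L-a), and Ŝ = inf_{0<r<a} [Lr/2 + d(r) + d(L-r)]. Then Ŝ_a < S_a and Ŝ < S_0. -/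
open Set

/-- with `d(r) = ∫_0^r √(ρ²/4 + v₀(ρ) - v_min) dρ` and the constants
`S₀ = d(L)`, `S_a = d(a) + d(L-a)`, `Ŝ_a = d(L-a)`,
`Ŝ = inf_{0<r<a} [Lr/2 + d(r) + d(L-r)]`, one has `Ŝ_a < S_a` and `Ŝ < S₀`. -/
theorem stmt12 (v0 : ℝ → ℝ) (a L vmin : ℝ) (ha : 0 < a) (hL : 2 * a < L)
    (hcont : ContinuousOn v0 (Ici 0))
    (hnonpos : ∀ r, 0 ≤ r → v0 r ≤ 0)
    (hsupp : ∀ r, a ≤ r → v0 r = 0)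
    (hvmin : vmin < 0)
    (hmin : ∀ r, 0 ≤ r → vmin ≤ v0 r)
    (h0 : v0 0 = vmin)
    (honly : ∀ r, 0 ≤ r → v0 r = vmin → r = 0)
    (d : ℝ → ℝ)
    (hd : ∀ r, d r = ∫ ρ in (0:ℝ)..r, Real.sqrt (ρ ^ 2 / 4 + v0 ρ - vmin)) :
    d (L - a) < d a + d (L - a) ∧
    sInf ((fun r => L * r / 2 + d r + d (L - r)) '' Ioo 0 a) < d L := by
  set g : ℝ → ℝ := fun ρ => Real.sqrt (ρ ^ 2 / 4 + v0 ρ - vmin) with hg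
  have hLpos : 0 < L := lt_trans (by linarith) hL
  have hgcont : ContinuousOn g (Ici 0) := by
    apply Real.continuous_sqrt.comp_continuousOn
    exact (((continuousOn_pow 2).div_const 4).add hcont).sub continuousOn_const
  have hgint : ∀ x y : ℝ, 0 ≤ x → 0 ≤ y →
      IntervalIntegrable g MeasureTheory.volume x y := by
    intro x y hx hy
    exact (hgcont.mono (by
      rintro t ht
      rcases le_total x y with h | h
      · rw [uIcc_of_le h] at ht; exact le_trans hx ht.1
      · rw [uIcc_of_ge h] at ht; exact le_trans hy ht.1)).intervalIntegrable
  have hgnonneg : ∀ ρ, 0 ≤ g ρ := fun ρ => Real.sqrt_nonneg _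
  have hdnonneg : ∀ x, 0 ≤ x → 0 ≤ d x := by
    intro x hx
    rw [hd]
    exact intervalIntegral.integral_nonneg hx (fun u _ => hgnonneg u)
  -- Part 1
  have hda : 0 < d a := by
    rw [hd]
    refine intervalIntegral.intervalIntegral_pos_of_pos_on (hgint 0 a le_rfl ha.le) ?_ ha
    intro x hx
    apply Real.sqrt_pos.mpr
    have := hmin x hx.1.le
    nlinarith [hx.1]
  refine ⟨by linarith, ?_⟩
  -- Part 2
  obtain ⟨ε, hε⟩ : ∃ ε : ℝ, ε = Real.sqrt (L ^ 2 / 4 - vmin) - L / 2 := ⟨_, rfl⟩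
  have hsq : Real.sqrt (L ^ 2 / 4 - vmin) ^ 2 = L ^ 2 / 4 - vmin := by
    apply Real.sq_sqrt; nlinarith
  have hεpos : 0 < ε := by
    have : L / 2 < Real.sqrt (L ^ 2 / 4 - vmin) := by
      rw [Real.lt_sqrt (by linarith)]; nlinarith
    linarith
  have hcw : ContinuousWithinAt g (Ici 0) 0 := hgcont 0 self_mem_Ici
  have hg0 : g 0 = 0 := by
    simp [hg, h0]
  obtain ⟨δ, hδpos, hδ⟩ := Metric.continuousWithinAt_iff.mp hcw (ε / 2) (by linarith)
  obtain ⟨r, hr⟩ : ∃ r : ℝ, r = min (min (a / 2) (δ / 2)) ε := ⟨_, rfl⟩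
  have hrpos : 0 < r := hr ▸ lt_min (lt_min (by linarith) (by linarith)) hεpos
  have hra : r < a := by
    have := hr ▸ le_trans (min_le_left _ _) (min_le_left (a / 2) (δ / 2))
    linarith
  have hrδ : r < δ := by
    have := hr ▸ le_trans (min_le_left _ _) (min_le_right (a / 2) (δ / 2))
    linarith
  have hrε : r ≤ ε := hr ▸ min_le_right _ _
  have hrLa : r < L - a := lt_trans hra (by linarith)
  -- d r ≤ r * (ε/2)
  have hdr : d r ≤ r * (ε / 2) := by
    rw [hd]
    calc ∫ ρ in (0:ℝ)..r, g ρ ≤ ∫ _ in (0:ℝ)..r, (ε / 2) := by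
          apply intervalIntegral.integral_mono_on hrpos.le (hgint 0 r le_rfl hrpos.le)
            intervalIntegrable_const
          intro x hx
          have : dist (g x) (g 0) < ε / 2 := hδ hx.1 (by
            rw [Real.dist_eq, sub_zero, abs_of_nonneg hx.1]; linarith [hx.2])
          rw [hg0, dist_zero_right, Real.norm_eq_abs, abs_of_nonneg (hgnonneg x)] at this
          linarith
      _ = r * (ε / 2) := by
          rw [intervalIntegral.integral_const, smul_eq_mul, sub_zero]
  -- split d L
  have hsplit : d L = d (L - r) + ∫ ρ in (L - r)..L, g ρ := by
    rw [hd, hd]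
    rw [intervalIntegral.integral_add_adjacent_intervals (hgint 0 (L - r) le_rfl (by linarith))
      (hgint (L - r) L (by linarith) hLpos.le)]
  -- lower bound on tail integral
  have htail : (L * r / 2 - r ^ 2 / 4) + r * ε ≤ ∫ ρ in (L - r)..L, g ρ := by
    have h1 : ∀ ρ ∈ Icc (L - r) L, ρ / 2 + ε ≤ g ρ := by
      intro ρ hρ
      have hρa : a ≤ ρ := by linarith [hρ.1]
      have hρ0 : 0 ≤ ρ := by linarith
      have hv : v0 ρ = 0 := hsupp ρ hρa
      show ρ / 2 + ε ≤ Real.sqrt (ρ ^ 2 / 4 + v0 ρ - vmin)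
      rw [hv, add_zero]
      rw [Real.le_sqrt (by linarith) (by nlinarith)]
      nlinarith [hρ.2]
    calc (L * r / 2 - r ^ 2 / 4) + r * ε = ∫ ρ in (L - r)..L, (ρ / 2 + ε) := by
          rw [intervalIntegral.integral_add ((intervalIntegral.intervalIntegrable_id).div_const 2)
            intervalIntegrable_const]
          rw [intervalIntegral.integral_div, integral_id, intervalIntegral.integral_const,
            smul_eq_mul]
          ring
      _ ≤ ∫ ρ in (L - r)..L, g ρ := by
          apply intervalIntegral.integral_mono_on (by linarith)
            (((intervalIntegral.intervalIntegrable_id).div_const 2).add intervalIntegrable_const)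
            (hgint (L - r) L (by linarith) hLpos.le) h1
  have hkey : L * r / 2 + d r + d (L - r) < d L := by
    have : r ^ 2 / 4 < r * (ε / 2) := by nlinarith
    rw [hsplit]
    nlinarith
  refine lt_of_le_of_lt (csInf_le ?_ ?_) hkey
  · refine ⟨0, ?_⟩
    rintro y ⟨x, hx, rfl⟩
    have h1 : (0:ℝ) ≤ L * x / 2 := div_nonneg (mul_nonneg hLpos.le hx.1.le) (by norm_num)
    have h2 : 0 ≤ d x := hdnonneg x hx.1.le
    have h3 : 0 ≤ d (L - x) := hdnonneg _ (by linarith [hx.2])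
    linarith
  · exact ⟨r, ⟨hrpos, hra⟩, rfl⟩
end

section
/- Let c > 0, a > 0, L > 0, and define G(t) = (c/2)·ln(1 + 1/t) + (a²/2)·(t + 1/2) for t > 0. Then G attains its minimum on (0,∞) at t* = √(1/4 + c/a²) - 1/2, and G(t*) = (a/4)·√(a² + 4c) + (c/2)·ln((√(a² + 4c) + a)²/(4c)). -/
/-- the function `G(t) = (c/2)·ln(1 + 1/t) + (a²/2)·(t + 1/2)` on `(0,∞)`
attains its minimum at `t* = √(1/4 + c/a²) - 1/2 > 0`, where `G'(t*) = 0`, and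
`G(t*) = (a/4)·√(a² + 4c) + (c/2)·ln((√(a² + 4c) + a)²/(4c))`. -/
theorem stmt15 (c a L : ℝ) (hc : 0 < c) (ha : 0 < a) (hL : 0 < L)
    (G : ℝ → ℝ) (hG : ∀ t, G t = c / 2 * Real.log (1 + 1 / t) + a ^ 2 / 2 * (t + 1 / 2))
    (tstar : ℝ) (ht : tstar = Real.sqrt (1 / 4 + c / a ^ 2) - 1 / 2) :
    0 < tstar ∧ HasDerivAt G 0 tstar ∧ (∀ t, 0 < t → G tstar ≤ G t) ∧
    G tstar = a / 4 * Real.sqrt (a ^ 2 + 4 * c)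
      + c / 2 * Real.log ((Real.sqrt (a ^ 2 + 4 * c) + a) ^ 2 / (4 * c)) := by
  have ha2 : (0:ℝ) < a ^ 2 := by positivity
  set s := Real.sqrt (1 / 4 + c / a ^ 2) with hs_def
  have hs2 : s ^ 2 = 1 / 4 + c / a ^ 2 := Real.sq_sqrt (by positivity)
  have hs_half : 1 / 2 < s := by
    rw [hs_def]
    rw [show (1/2 : ℝ) = Real.sqrt (1/4) by
      rw [show (1/4:ℝ) = (1/2)^2 by norm_num, Real.sqrt_sq (by norm_num)]]
    apply Real.sqrt_lt_sqrt (by norm_num)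
    have : 0 < c / a ^ 2 := by positivity
    linarith
  have htpos : 0 < tstar := by rw [ht]; linarith
  have hkey : tstar * (tstar + 1) = c / a ^ 2 := by
    rw [ht]; nlinarith [hs2]
  -- derivative formula
  have hGfun : G = fun t => c / 2 * Real.log (1 + 1 / t) + a ^ 2 / 2 * (t + 1 / 2) :=
    funext hG
  have hderiv : ∀ x : ℝ, 0 < x →
      HasDerivAt G (a ^ 2 / 2 - c / (2 * (x * (x + 1)))) x := by
    intro x hx
    have hx0 : x ≠ 0 := ne_of_gt hx
    have hu : (0:ℝ) < 1 + 1 / x := by positivity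
    have h1 : HasDerivAt (fun t : ℝ => 1 + 1 / t) (-(x ^ 2)⁻¹) x := by
      simpa [one_div] using (hasDerivAt_inv hx0).const_add (1:ℝ)
    have h2 : HasDerivAt (fun t : ℝ => Real.log (1 + 1 / t))
        (-(x ^ 2)⁻¹ / (1 + 1 / x)) x := h1.log (ne_of_gt hu)
    have h3 : HasDerivAt (fun t : ℝ => c / 2 * Real.log (1 + 1 / t))
        (c / 2 * (-(x ^ 2)⁻¹ / (1 + 1 / x))) x := h2.const_mul _
    have h4 : HasDerivAt (fun t : ℝ => a ^ 2 / 2 * (t + 1 / 2)) (a ^ 2 / 2 * 1) x :=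
      ((hasDerivAt_id x).add_const (1/2 : ℝ)).const_mul _
    have h5 := h3.add h4
    rw [hGfun]
    refine HasDerivAt.congr_deriv h5 ?_
    have hx1 : x + 1 ≠ 0 := by positivity
    field_simp
    ring
  refine ⟨htpos, ?_, ?_, ?_⟩
  · -- derivative zero at tstar
    have := hderiv tstar htpos
    have hval : a ^ 2 / 2 - c / (2 * (tstar * (tstar + 1))) = 0 := by
      rw [hkey]; field_simp; ring
    rwa [hval] at this
  · -- minimality
    intro t htp
    have hcont : ∀ x : ℝ, 0 < x → ContinuousAt G x := fun x hx =>
      (hderiv x hx).continuousAt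
    rcases le_or_gt tstar t with hle | hlt
    · have hmono : MonotoneOn G (Set.Ici tstar) := by
        apply monotoneOn_of_deriv_nonneg (convex_Ici tstar)
        · exact fun x hx => (hcont x (lt_of_lt_of_le htpos hx)).continuousWithinAt
        · intro x hx
          rw [interior_Ici] at hx
          exact (hderiv x (htpos.trans hx)).differentiableAt.differentiableWithinAt
        · intro x hx
          rw [interior_Ici] at hx
          have hx0 : 0 < x := htpos.trans hx
          rw [(hderiv x hx0).deriv]
          have hxt : tstar < x := hx
          have h1 : c / a ^ 2 < x * (x + 1) := by
            nlinarith [mul_pos (sub_pos.2 hxt) (show (0:ℝ) < x + tstar + 1 by linarith)]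
          have h2 : c / (2 * (x * (x + 1))) ≤ a ^ 2 / 2 := by
            rw [div_le_div_iff₀ (by nlinarith) (by norm_num)]
            have : c < a ^ 2 * (x * (x + 1)) := by
              rw [div_lt_iff₀ ha2] at h1; linarith
            nlinarith
          linarith
      exact hmono (Set.self_mem_Ici) hle hle
    · have hanti : AntitoneOn G (Set.Icc t tstar) := by
        apply antitoneOn_of_deriv_nonpos (convex_Icc t tstar)
        · exact fun x hx => (hcont x (lt_of_lt_of_le htp hx.1)).continuousWithinAt
        · intro x hx
          rw [interior_Icc] at hx
          exact (hderiv x (htp.trans hx.1)).differentiableAt.differentiableWithinAt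
        · intro x hx
          rw [interior_Icc] at hx
          have hx0 : 0 < x := htp.trans hx.1
          rw [(hderiv x hx0).deriv]
          have h1 : x * (x + 1) < c / a ^ 2 := by
            nlinarith [mul_pos (sub_pos.2 hx.2) (show (0:ℝ) < tstar + x + 1 by linarith)]
          have h2 : a ^ 2 / 2 ≤ c / (2 * (x * (x + 1))) := by
            rw [div_le_div_iff₀ (by norm_num) (by nlinarith)]
            have : a ^ 2 * (x * (x + 1)) < c := by
              rw [lt_div_iff₀ ha2] at h1; linarith
            nlinarith
          linarith
      exact hanti (Set.left_mem_Icc.2 hlt.le) (Set.right_mem_Icc.2 hlt.le) hlt.le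
  · -- value at tstar
    set r := Real.sqrt (a ^ 2 + 4 * c) with hr_def
    have hr2 : r ^ 2 = a ^ 2 + 4 * c := Real.sq_sqrt (by positivity)
    have hra : a < r := by
      nlinarith [hr2, Real.sqrt_nonneg (a ^ 2 + 4 * c)]
    have hs_eq : s = r / (2 * a) := by
      rw [hs_def, show (1/4 + c / a ^ 2) = (r / (2 * a)) ^ 2 by
        rw [div_pow, hr2]; field_simp; ring]
      exact Real.sqrt_sq (by positivity)
    have ht' : tstar = (r - a) / (2 * a) := by rw [ht, hs_eq]; field_simp
    have hrma : 0 < r - a := by linarith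
    have h1t : 1 + 1 / tstar = (r + a) ^ 2 / (4 * c) := by
      rw [ht', one_add_div (by positivity : ((r - a) / (2 * a)) ≠ 0)]
      rw [div_eq_div_iff (by positivity) (by positivity)]
      field_simp
      linear_combination (-(r + a)) * hr2
    have h2t : a ^ 2 / 2 * (tstar + 1 / 2) = a / 4 * r := by
      rw [ht']; field_simp; ring
    rw [hG, h1t, h2t]
    ring
end
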